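/- (Mixing time of the ε-SCA.) Fix ε ∈ (0,1] and β ≥ 0, set r = (1−ε) + ε · max_{u∈V} ∑_{y∈V} tanh(β |J_{u,y}| / 2), and assume 0 < r < 1. Let π be any probability distribution on {-1,+1}^V that is stationary for the ε-SCA kernel, i.e. ∑_σ π(σ) P_{β,ε}(σ,τ) = π(τ) for all τ. Then for every δ > 0 and every t ≥ ⌈(log|V| − log δ)/log(1/r)⌉, one has max_{σ ∈ {-1,+1}^V} ‖P^t_{β,ε}(σ,·) − π‖_TV ≤ δ, where ‖μ−ν‖_TV = (1/2) ∑_{η ∈ {-1,+1}^V} |μ(η) − ν(η)|. In particular, the mixing time t_mix(δ) = min{t : max_σ ‖P^t_{β,ε}(σ,·) − π‖_TV ≤ δ} satisfies t_mix(δ) ≤ ⌈(log|V| − log δ)/log(1/r)⌉. -/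

import Mathlib

open Real Finset

variable {V : Type*}

/-- The real value of a Boolean spin: `true ↦ +1`, `false ↦ -1`. -/
def sp (b : Bool) : ℝ := if b then 1 else -1

/-- The cavity field `h̃_x(σ) = ∑_y J_{x,y} σ_y + h_x`. -/
noncomputable def cavity [Fintype V] (J : V → V → ℝ) (h : V → ℝ) (σ : V → Bool) (x : V) : ℝ :=
  (∑ y, J x y * sp (σ y)) + h x

/-- The ε-SCA flip probability `p_x(σ) = e^{-(β/2) h̃_x(σ) σ_x} / (2 cosh((β/2) h̃_x(σ)))`. -/
noncomputable def flipProb [Fintype V] (J : V → V → ℝ) (h : V → ℝ) (β : ℝ)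
    (σ : V → Bool) (x : V) : ℝ :=
  Real.exp (-(β / 2) * cavity J h σ x * sp (σ x)) / (2 * Real.cosh ((β / 2) * cavity J h σ x))

/-- The ε-SCA transition kernel
`P_{β,ε}(σ,τ) = ∏_{x : τ_x = -σ_x} ε p_x(σ) · ∏_{y : τ_y = σ_y} (1 - ε p_y(σ))`. -/
noncomputable def Peps [Fintype V] [DecidableEq V] (J : V → V → ℝ) (h : V → ℝ) (β ε : ℝ)
    (σ τ : V → Bool) : ℝ :=
  (∏ x ∈ univ.filter (fun x => τ x ≠ σ x), ε * flipProb J h β σ x) *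
    ∏ y ∈ univ.filter (fun y => τ y = σ y), (1 - ε * flipProb J h β σ y)

/-- The t-fold product (t-step transition probabilities) of a kernel P on configurations. -/
noncomputable def kpow [Fintype V] [DecidableEq V]
    (P : (V → Bool) → (V → Bool) → ℝ) : ℕ → (V → Bool) → (V → Bool) → ℝ
  | 0 => fun σ τ => if σ = τ then 1 else 0
  | n + 1 => fun σ τ => ∑ η, P σ η * kpow P n η τ

/-- Total variation distance `‖μ−ν‖_TV = (1/2) ∑_η |μ(η) − ν(η)|`. -/
noncomputable def tvDist [Fintype V] [DecidableEq V] (μ ν : (V → Bool) → ℝ) : ℝ :=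
  (1 / 2) * ∑ η, |μ η - ν η|

lemma myAbsSinhLe (x : ℝ) : |Real.sinh x| ≤ Real.cosh x := by
  rw [abs_le]
  constructor
  · nlinarith [Real.exp_pos x, Real.cosh_add_sinh x]
  · nlinarith [Real.exp_pos (-x), Real.cosh_sub_sinh x]

lemma myAbsTanhLe (x : ℝ) : |Real.tanh x| ≤ 1 := by
  rw [Real.tanh_eq_sinh_div_cosh, abs_div, abs_of_pos (Real.cosh_pos x),
    div_le_one (Real.cosh_pos x)]
  exact myAbsSinhLe x

lemma myOneLeCosh (x : ℝ) : 1 ≤ Real.cosh x := by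
  nlinarith [Real.cosh_sq x, Real.cosh_pos x, sq_nonneg (Real.sinh x)]

lemma myTanhNonneg {x : ℝ} (hx : 0 ≤ x) : 0 ≤ Real.tanh x := by
  rw [Real.tanh_eq_sinh_div_cosh]
  exact div_nonneg (Real.sinh_nonneg_iff.2 hx) (Real.cosh_pos x).le

lemma myTanhMono {a b : ℝ} (hab : b ≤ a) : Real.tanh b ≤ Real.tanh a := by
  rw [Real.tanh_eq_sinh_div_cosh, Real.tanh_eq_sinh_div_cosh,
    div_le_div_iff₀ (Real.cosh_pos b) (Real.cosh_pos a)]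
  have h1 : 0 ≤ Real.sinh (a - b) := Real.sinh_nonneg_iff.2 (by linarith)
  rw [Real.sinh_sub] at h1
  linarith

lemma myTanhSubLe {a b : ℝ} (hab : b ≤ a) :
    Real.tanh a - Real.tanh b ≤ 2 * Real.tanh ((a - b) / 2) := by
  have hA := Real.cosh_pos a
  have hB := Real.cosh_pos b
  have hC := Real.cosh_pos ((a - b) / 2)
  have hs : 0 ≤ Real.sinh ((a - b) / 2) := Real.sinh_nonneg_iff.2 (by linarith)
  have e1 : Real.sinh (a - b) = 2 * Real.sinh ((a-b)/2) * Real.cosh ((a-b)/2) := by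
    rw [← Real.sinh_two_mul]; ring_nf
  have e2 : Real.cosh (a - b) = 2 * Real.cosh ((a-b)/2) ^ 2 - 1 := by
    have h2 := Real.cosh_two_mul ((a-b)/2)
    have h3 := Real.cosh_sq_sub_sinh_sq ((a-b)/2)
    have : (2:ℝ) * ((a-b)/2) = a - b := by ring
    rw [this] at h2
    linarith
  have e3 : Real.cosh a * Real.cosh b = (Real.cosh (a+b) + Real.cosh (a-b)) / 2 := by
    rw [Real.cosh_add, Real.cosh_sub]; ring
  have e4 : 1 ≤ Real.cosh (a + b) := myOneLeCosh _
  have key : Real.cosh ((a-b)/2) ^ 2 ≤ Real.cosh a * Real.cosh b := by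
    rw [e3, e2]; linarith
  rw [Real.tanh_eq_sinh_div_cosh a, Real.tanh_eq_sinh_div_cosh b,
    Real.tanh_eq_sinh_div_cosh, div_sub_div _ _ hA.ne' hB.ne']
  have e5 : Real.sinh a * Real.cosh b - Real.cosh a * Real.sinh b = Real.sinh (a - b) := by
    rw [Real.sinh_sub]
  rw [e5, div_le_iff₀ (mul_pos hA hB), e1]
  have : 2 * (Real.sinh ((a-b)/2) / Real.cosh ((a-b)/2)) * (Real.cosh a * Real.cosh b)
      = 2 * Real.sinh ((a-b)/2) * ((Real.cosh a * Real.cosh b) / Real.cosh ((a-b)/2)) := by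
    ring
  rw [this]
  have h6 : Real.cosh ((a-b)/2) ≤ Real.cosh a * Real.cosh b / Real.cosh ((a-b)/2) := by
    rw [le_div_iff₀ hC]
    nlinarith [key]
  nlinarith [mul_nonneg (mul_nonneg (by norm_num : (0:ℝ) ≤ 2) hs)
    (sub_nonneg.2 h6)]

lemma myAbsTanhSub (a b : ℝ) :
    |Real.tanh a - Real.tanh b| ≤ 2 * Real.tanh (|a - b| / 2) := by
  rcases le_total b a with hab | hab
  · rw [abs_of_nonneg (by linarith [myTanhMono hab]), abs_of_nonneg (by linarith)]
    exact myTanhSubLe hab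
  · rw [abs_of_nonpos (by linarith [myTanhMono hab]), abs_of_nonpos (by linarith)]
    have := myTanhSubLe hab
    rw [neg_sub, neg_sub]
    exact this
section kernelLemmas

variable [Fintype V] [DecidableEq V]

lemma flipProb_eq (J : V → V → ℝ) (h : V → ℝ) (β : ℝ) (σ : V → Bool) (x : V) :
    flipProb J h β σ x
      = (1 - sp (σ x) * Real.tanh (β / 2 * cavity J h σ x)) / 2 := by
  set a := β / 2 * cavity J h σ x with ha
  have hC := Real.cosh_pos a
  cases hb : σ x
  · have : -(β / 2) * cavity J h σ x * sp false = a := by simp [sp, ha]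
    rw [flipProb, hb, this, ← ha, ← Real.cosh_add_sinh, Real.tanh_eq_sinh_div_cosh]
    simp only [sp, if_neg Bool.false_ne_true]
    field_simp
    ring
  · have : -(β / 2) * cavity J h σ x * sp true = -a := by simp [sp, ha]
    rw [flipProb, hb, this, ← ha, ← Real.cosh_sub_sinh, Real.tanh_eq_sinh_div_cosh]
    simp only [sp, if_pos rfl, if_true]
    field_simp

lemma flipProb_nonneg (J : V → V → ℝ) (h : V → ℝ) (β : ℝ) (σ : V → Bool) (x : V) :
    0 ≤ flipProb J h β σ x := by
  rw [flipProb]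
  positivity

lemma flipProb_le_one (J : V → V → ℝ) (h : V → ℝ) (β : ℝ) (σ : V → Bool) (x : V) :
    flipProb J h β σ x ≤ 1 := by
  rw [flipProb_eq]
  have h1 : |sp (σ x)| = 1 := by cases σ x <;> simp [sp]
  have h2 : |sp (σ x) * Real.tanh (β / 2 * cavity J h σ x)| ≤ 1 := by
    rw [abs_mul, h1, one_mul]; exact myAbsTanhLe _
  rw [abs_le] at h2
  linarith [h2.1]

/-- per-site update distribution -/
noncomputable def qfun (J : V → V → ℝ) (h : V → ℝ) (β ε : ℝ) (σ : V → Bool) (x : V)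
    (b : Bool) : ℝ :=
  if b = σ x then 1 - ε * flipProb J h β σ x else ε * flipProb J h β σ x

lemma qfun_nonneg (J : V → V → ℝ) (h : V → ℝ) (β : ℝ) {ε : ℝ} (hε : ε ∈ Set.Ioc (0:ℝ) 1)
    (σ : V → Bool) (x : V) (b : Bool) : 0 ≤ qfun J h β ε σ x b := by
  have h1 := flipProb_nonneg J h β σ x
  have h2 := flipProb_le_one J h β σ x
  have h3 : ε * flipProb J h β σ x ≤ 1 :=
    le_trans (mul_le_mul_of_nonneg_left h2 hε.1.le) (by linarith [hε.2])
  rw [qfun]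
  split
  · linarith
  · exact mul_nonneg hε.1.le h1

lemma qfun_sum (J : V → V → ℝ) (h : V → ℝ) (β ε : ℝ) (σ : V → Bool) (x : V) :
    qfun J h β ε σ x true + qfun J h β ε σ x false = 1 := by
  cases hb : σ x <;> simp [qfun, hb]

lemma Peps_eq_prod (J : V → V → ℝ) (h : V → ℝ) (β ε : ℝ) (σ τ : V → Bool) :
    Peps J h β ε σ τ = ∏ x, qfun J h β ε σ x (τ x) := by
  rw [Peps, mul_comm]
  rw [← Finset.prod_filter_mul_prod_filter_not univ (fun x => τ x = σ x)
    (fun x => qfun J h β ε σ x (τ x))]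
  congr 1
  · refine Finset.prod_congr rfl fun x hx => ?_
    rw [Finset.mem_filter] at hx
    rw [qfun, if_pos hx.2]
  · refine Finset.prod_congr (by simp [ne_eq]) fun x hx => ?_
    rw [Finset.mem_filter] at hx
    rw [qfun, if_neg hx.2]

lemma sum_prod_bool (g : V → Bool → ℝ) :
    ∑ τ : V → Bool, ∏ x, g x (τ x) = ∏ x, (g x true + g x false) := by
  have h2 : ∀ x : V, g x true + g x false = ∑ b, g x b := fun x => (Fintype.sum_bool _).symm
  simp_rw [h2]
  rw [Fintype.prod_sum]

lemma Peps_nonneg (J : V → V → ℝ) (h : V → ℝ) (β : ℝ) {ε : ℝ} (hε : ε ∈ Set.Ioc (0:ℝ) 1)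
    (σ τ : V → Bool) : 0 ≤ Peps J h β ε σ τ := by
  rw [Peps_eq_prod]
  exact Finset.prod_nonneg fun x _ => qfun_nonneg J h β hε σ x (τ x)

lemma Peps_rowsum (J : V → V → ℝ) (h : V → ℝ) (β ε : ℝ) (σ : V → Bool) :
    ∑ τ, Peps J h β ε σ τ = 1 := by
  simp only [Peps_eq_prod]
  rw [sum_prod_bool]
  simp [qfun_sum]

end kernelLemmas
section swap

variable [Fintype V] [DecidableEq V]

lemma sum_prod_partial (g : V → Bool → ℝ) (x₀ : V)
    (hsum : ∀ x, g x true + g x false = 1) :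
    ∑ τ : V → Bool, ∏ x ∈ univ.erase x₀, g x (τ x) = 2 := by
  classical
  set G : V → Bool → ℝ := fun x b => if x = x₀ then 1 else g x b with hG
  have key : ∀ τ : V → Bool, ∏ x, G x (τ x) = ∏ x ∈ univ.erase x₀, g x (τ x) := by
    intro τ
    rw [← Finset.mul_prod_erase univ (fun x => G x (τ x)) (mem_univ x₀)]
    rw [show G x₀ (τ x₀) = 1 from if_pos rfl, one_mul]
    exact Finset.prod_congr rfl fun x hx => if_neg (Finset.ne_of_mem_erase hx)
  calc ∑ τ : V → Bool, ∏ x ∈ univ.erase x₀, g x (τ x)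
      = ∑ τ : V → Bool, ∏ x, G x (τ x) := by simp_rw [key]
    _ = ∏ x, (G x true + G x false) := sum_prod_bool G
    _ = ∏ x, (if x = x₀ then 2 else 1) := by
        refine Finset.prod_congr rfl fun x _ => ?_
        by_cases hx : x = x₀ <;> simp [hG, hx, hsum x] <;> norm_num
    _ = 2 := by rw [Finset.prod_ite_eq' univ x₀ (fun _ => (2:ℝ))]; simp

lemma swap_bound (g g' : V → Bool → ℝ) (x₀ : V)
    (hgg' : ∀ x, x ≠ x₀ → g x = g' x)
    (hg0 : ∀ x b, 0 ≤ g x b)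
    (hsum : ∀ x, g x true + g x false = 1)
    (hsum' : g' x₀ true + g' x₀ false = 1)
    (f : (V → Bool) → ℝ) (L : ℝ)
    (hf : ∀ τ τ' : V → Bool, (∀ z, z ≠ x₀ → τ z = τ' z) → |f τ - f τ'| ≤ L) :
    |∑ τ, (∏ x, g x (τ x)) * f τ - ∑ τ, (∏ x, g' x (τ x)) * f τ|
      ≤ |g x₀ true - g' x₀ true| * L := by
  classical
  set c := g x₀ true - g' x₀ true with hc
  set w : (V → Bool) → ℝ := fun τ => ∏ x ∈ univ.erase x₀, g x (τ x) with hw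
  have hw0 : ∀ τ, 0 ≤ w τ := fun τ => Finset.prod_nonneg fun x _ => hg0 x (τ x)
  have hprod : ∀ τ : V → Bool, ∏ x, g x (τ x) = g x₀ (τ x₀) * w τ := fun τ =>
    (Finset.mul_prod_erase univ _ (mem_univ x₀)).symm
  have hprod' : ∀ τ : V → Bool, ∏ x, g' x (τ x) = g' x₀ (τ x₀) * w τ := by
    intro τ
    rw [← Finset.mul_prod_erase univ (fun x => g' x (τ x)) (mem_univ x₀)]
    congr 1
    exact Finset.prod_congr rfl fun x hx => by
      rw [hgg' x (Finset.ne_of_mem_erase hx)]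
  have hdiff : ∀ b, g x₀ b - g' x₀ b = c * sp b := by
    intro b; cases b
    · simp only [sp, if_neg Bool.false_ne_true, hc]; linarith [hsum x₀, hsum']
    · simp [sp, hc]
  have e1 : ∑ τ, (∏ x, g x (τ x)) * f τ - ∑ τ, (∏ x, g' x (τ x)) * f τ
      = c * ∑ τ, sp (τ x₀) * (w τ * f τ) := by
    rw [← Finset.sum_sub_distrib, Finset.mul_sum]
    refine Finset.sum_congr rfl fun τ _ => ?_
    rw [hprod, hprod']
    linear_combination (w τ * f τ) * hdiff (τ x₀)
  set e : (V → Bool) → (V → Bool) := fun τ => Function.update τ x₀ (!(τ x₀)) with he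
  have hee : Function.Involutive e := by
    intro τ; funext z
    by_cases hz : z = x₀
    · subst hz; simp [he, Function.update_self]
    · simp [he, Function.update_of_ne hz]
  have hbij : Function.Bijective e := hee.bijective
  have hsp : ∀ τ, sp ((e τ) x₀) = - sp (τ x₀) := by
    intro τ
    have : (e τ) x₀ = !(τ x₀) := Function.update_self _ _ _
    rw [this]; cases τ x₀ <;> simp [sp]
  have hwe : ∀ τ, w (e τ) = w τ := by
    intro τ
    refine Finset.prod_congr rfl fun x hx => ?_
    rw [show (e τ) x = τ x from Function.update_of_ne (Finset.ne_of_mem_erase hx) _ _]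
  set S := ∑ τ, sp (τ x₀) * (w τ * f τ) with hS
  have hS2 : S = ∑ τ, sp ((e τ) x₀) * (w (e τ) * f (e τ)) :=
    (hbij.sum_comp fun τ => sp (τ x₀) * (w τ * f τ)).symm
  have h2S : 2 * S = ∑ τ, sp (τ x₀) * (w τ * (f τ - f (e τ))) := by
    nth_rewrite 1 [two_mul]
    nth_rewrite 2 [hS2]
    rw [hS, ← Finset.sum_add_distrib]
    refine Finset.sum_congr rfl fun τ _ => ?_
    rw [hsp, hwe]
    ring
  have hagree : ∀ τ : V → Bool, (∀ z, z ≠ x₀ → τ z = (e τ) z) := fun τ z hz =>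
    (Function.update_of_ne hz _ _).symm
  have habs : |2 * S| ≤ 2 * L := by
    calc |2 * S| ≤ ∑ τ, |sp (τ x₀) * (w τ * (f τ - f (e τ)))| :=
          h2S ▸ Finset.abs_sum_le_sum_abs _ _
      _ ≤ ∑ τ, w τ * L := by
          refine Finset.sum_le_sum fun τ _ => ?_
          rw [abs_mul, abs_mul]
          have hsp1 : |sp (τ x₀)| = 1 := by cases τ x₀ <;> simp [sp]
          rw [hsp1, one_mul, abs_of_nonneg (hw0 τ)]
          exact mul_le_mul_of_nonneg_left (hf τ (e τ) (hagree τ)) (hw0 τ)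
      _ = 2 * L := by
          rw [← Finset.sum_mul, hw]
          rw [sum_prod_partial g x₀ hsum]
  have hSle : |S| ≤ L := by
    rw [abs_mul] at habs
    norm_num at habs
    linarith
  rw [e1, abs_mul]
  exact mul_le_mul_of_nonneg_left hSle (abs_nonneg c)

lemma telescope_bound (g g' : V → Bool → ℝ)
    (hg0 : ∀ x b, 0 ≤ g x b) (hg'0 : ∀ x b, 0 ≤ g' x b)
    (hsum : ∀ x, g x true + g x false = 1) (hsum' : ∀ x, g' x true + g' x false = 1)
    (f : (V → Bool) → ℝ) (L : ℝ)
    (hf : ∀ (x₀ : V) (τ τ' : V → Bool), (∀ z, z ≠ x₀ → τ z = τ' z) → |f τ - f τ'| ≤ L) :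
    |∑ τ, (∏ x, g x (τ x)) * f τ - ∑ τ, (∏ x, g' x (τ x)) * f τ|
      ≤ ∑ x, |g x true - g' x true| * L := by
  classical
  set hyb : Finset V → V → Bool → ℝ := fun s x => if x ∈ s then g x else g' x with hhyb
  have hyb0 : ∀ s x b, 0 ≤ hyb s x b := by
    intro s x b; by_cases hx : x ∈ s <;> simp [hhyb, hx] <;> [exact hg0 x b; exact hg'0 x b]
  have hybsum : ∀ s x, hyb s x true + hyb s x false = 1 := by
    intro s x; by_cases hx : x ∈ s <;> simp [hhyb, hx] <;> [exact hsum x; exact hsum' x]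
  have main : ∀ s : Finset V,
      |∑ τ, (∏ x, hyb s x (τ x)) * f τ - ∑ τ, (∏ x, g' x (τ x)) * f τ|
        ≤ ∑ x ∈ s, |g x true - g' x true| * L := by
    intro s
    induction s using Finset.induction_on with
    | empty => simp [hhyb]
    | insert a s ha ih =>
      have hgg : ∀ x, x ≠ a → hyb (insert a s) x = hyb s x := by
        intro x hx
        simp [hhyb, Finset.mem_insert, hx]
      have hswap := swap_bound (hyb (insert a s)) (hyb s) a hgg (hyb0 _)
        (hybsum _) (hybsum s a) f L (hf a)
      have hval : hyb (insert a s) a true = g a true := by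
        simp [hhyb, Finset.mem_insert]
      have hval' : hyb s a true = g' a true := by
        simp [hhyb, ha]
      rw [hval, hval'] at hswap
      rw [Finset.sum_insert ha]
      calc |∑ τ, (∏ x, hyb (insert a s) x (τ x)) * f τ - ∑ τ, (∏ x, g' x (τ x)) * f τ|
          ≤ |∑ τ, (∏ x, hyb (insert a s) x (τ x)) * f τ - ∑ τ, (∏ x, hyb s x (τ x)) * f τ|
            + |∑ τ, (∏ x, hyb s x (τ x)) * f τ - ∑ τ, (∏ x, g' x (τ x)) * f τ| := by
            exact abs_sub_le _ _ _
        _ ≤ |g a true - g' a true| * L + ∑ x ∈ s, |g x true - g' x true| * L := by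
            exact add_le_add hswap ih
  have huniv : ∀ x, hyb univ x = g x := fun x => if_pos (mem_univ x)
  have := main univ
  simp_rw [huniv] at this
  exact this

end swap
section onestep

variable [Fintype V] [DecidableEq V]

lemma cavity_diff (J : V → V → ℝ) (h : V → ℝ) (σ σ' : V → Bool) (y : V)
    (hagree : ∀ z, z ≠ y → σ z = σ' z) (x : V) :
    cavity J h σ x - cavity J h σ' x = J x y * (sp (σ y) - sp (σ' y)) := by
  rw [cavity, cavity]
  have : (∑ z, J x z * sp (σ z)) - (∑ z, J x z * sp (σ' z))
      = ∑ z, (J x z * sp (σ z) - J x z * sp (σ' z)) := (Finset.sum_sub_distrib _ _).symm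
  have h2 : ∑ z, (J x z * sp (σ z) - J x z * sp (σ' z)) = J x y * (sp (σ y) - sp (σ' y)) := by
    rw [Finset.sum_eq_single y]
    · ring
    · intro z _ hz
      rw [hagree z hz]; ring
    · intro hy; exact absurd (mem_univ y) hy
  linarith [this, h2]

lemma flipProb_flip (J : V → V → ℝ) (h : V → ℝ) (β : ℝ) (σ σ' : V → Bool) (y : V)
    (hagree : ∀ z, z ≠ y → σ z = σ' z) (hyy : J y y = 0) (hne : σ y ≠ σ' y) :
    flipProb J h β σ' y = 1 - flipProb J h β σ y := by
  have hcav : cavity J h σ' y = cavity J h σ y := by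
    have := cavity_diff J h σ σ' y hagree y
    rw [hyy] at this
    linarith
  rw [flipProb_eq, flipProb_eq, hcav]
  have hsp : sp (σ' y) = - sp (σ y) := by
    cases hb : σ y <;> cases hb' : σ' y <;> simp_all [sp]
  rw [hsp]
  ring

lemma flipProb_diff_le (J : V → V → ℝ) (h : V → ℝ) (β : ℝ) (hβ : 0 ≤ β)
    (σ σ' : V → Bool) (y : V) (hagree : ∀ z, z ≠ y → σ z = σ' z) (x : V) (hxy : x ≠ y) :
    |flipProb J h β σ x - flipProb J h β σ' x| ≤ Real.tanh (β * |J x y| / 2) := by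
  by_cases hsame : σ y = σ' y
  · have hss : σ = σ' := by
      funext z
      by_cases hz : z = y
      · rw [hz]; exact hsame
      · exact hagree z hz
    rw [hss, sub_self, abs_zero]
    exact myTanhNonneg (by positivity)
  · have hxx : σ x = σ' x := hagree x hxy
    rw [flipProb_eq, flipProb_eq, hxx]
    set a := β / 2 * cavity J h σ x with ha
    set a' := β / 2 * cavity J h σ' x with ha'
    have hcav : a - a' = β / 2 * (J x y * (sp (σ y) - sp (σ' y))) := by
      rw [ha, ha', ← mul_sub, cavity_diff J h σ σ' y hagree x]
    have hspd : |sp (σ y) - sp (σ' y)| = 2 := by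
      cases hb : σ y <;> cases hb' : σ' y <;> simp_all [sp] <;> norm_num
    have habs : |a - a'| = β * |J x y| := by
      rw [hcav, abs_mul, abs_mul, hspd, abs_of_nonneg (by positivity : (0:ℝ) ≤ β / 2)]
      ring
    have key := myAbsTanhSub a a'
    rw [habs] at key
    have e1 : (1 - sp (σ' x) * Real.tanh a) / 2 - (1 - sp (σ' x) * Real.tanh a') / 2
        = sp (σ' x) * (Real.tanh a' - Real.tanh a) / 2 := by ring
    rw [e1, abs_div, abs_mul]
    have hsp1 : |sp (σ' x)| = 1 := by cases σ' x <;> simp [sp]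
    rw [hsp1, one_mul, abs_sub_comm]
    have h2 : |(2:ℝ)| = 2 := by norm_num
    rw [h2]
    linarith [key]

end onestep
section contract

variable [Fintype V] [DecidableEq V]

lemma step_contract (J : V → V → ℝ) (h : V → ℝ) (hsym : ∀ x y, J x y = J y x)
    (β : ℝ) (hβ : 0 ≤ β) {ε : ℝ} (hε : ε ∈ Set.Ioc (0:ℝ) 1)
    (hJdiag : ∀ x, J x x = 0) (r : ℝ) (hr0 : 0 ≤ r)
    (hrle : ∀ u, (1 - ε) + ε * ∑ x, Real.tanh (β * |J u x| / 2) ≤ r)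
    (f : (V → Bool) → ℝ) (L : ℝ) (hL : 0 ≤ L)
    (hf : ∀ (x₀ : V) (τ τ' : V → Bool), (∀ z, z ≠ x₀ → τ z = τ' z) → |f τ - f τ'| ≤ L)
    (y : V) (σ σ' : V → Bool) (hagree : ∀ z, z ≠ y → σ z = σ' z) :
    |∑ τ, Peps J h β ε σ τ * f τ - ∑ τ, Peps J h β ε σ' τ * f τ| ≤ r * L := by
  by_cases hsame : σ y = σ' y
  · have hss : σ = σ' := by
      funext z
      by_cases hz : z = y
      · rw [hz]; exact hsame
      · exact hagree z hz
    rw [hss, sub_self, abs_zero]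
    exact mul_nonneg hr0 hL
  · have hpp := flipProb_flip J h β σ σ' y hagree (hJdiag y) hsame
    simp only [Peps_eq_prod]
    refine le_trans (telescope_bound (qfun J h β ε σ) (qfun J h β ε σ')
      (qfun_nonneg J h β hε σ) (qfun_nonneg J h β hε σ')
      (qfun_sum J h β ε σ) (qfun_sum J h β ε σ') f L hf) ?_
    rw [← Finset.sum_mul]
    refine mul_le_mul_of_nonneg_right ?_ hL
    have hbound : ∀ x, |qfun J h β ε σ x true - qfun J h β ε σ' x true|
        ≤ if x = y then 1 - ε else ε * Real.tanh (β * |J y x| / 2) := by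
      intro x
      by_cases hx : x = y
      · subst hx
        rw [if_pos rfl]
        cases hb : σ x
        · have hb' : σ' x = true := by
            cases hb2 : σ' x
            · exact absurd (hb.trans hb2.symm) hsame
            · rfl
          have : qfun J h β ε σ x true - qfun J h β ε σ' x true = ε - 1 := by
            rw [qfun, qfun, hpp, hb, hb']
            norm_num
            ring
          rw [this, abs_of_nonpos (by linarith [hε.2])]
          linarith
        · have hb' : σ' x = false := by
            cases hb2 : σ' x
            · rfl
            · exact absurd (hb.trans hb2.symm) hsame
          have : qfun J h β ε σ x true - qfun J h β ε σ' x true = 1 - ε := by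
            rw [qfun, qfun, hpp, hb, hb']
            norm_num
            ring
          rw [this, abs_of_nonneg (by linarith [hε.2])]
      · rw [if_neg hx]
        have hxx : σ x = σ' x := hagree x hx
        have key := flipProb_diff_le J h β hβ σ σ' y hagree x hx
        have e2 : |qfun J h β ε σ x true - qfun J h β ε σ' x true|
            = ε * |flipProb J h β σ x - flipProb J h β σ' x| := by
          rw [qfun, qfun, ← hxx]
          split
          · rw [show (1 - ε * flipProb J h β σ x) - (1 - ε * flipProb J h β σ' x)
                = -(ε * (flipProb J h β σ x - flipProb J h β σ' x)) by ring,
              abs_neg, abs_mul, abs_of_nonneg hε.1.le]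
          · rw [show ε * flipProb J h β σ x - ε * flipProb J h β σ' x
                = ε * (flipProb J h β σ x - flipProb J h β σ' x) by ring,
              abs_mul, abs_of_nonneg hε.1.le]
        rw [e2]
        have hJ : |J x y| = |J y x| := by rw [hsym x y]
        rw [← hJ]
        exact mul_le_mul_of_nonneg_left key hε.1.le
    calc ∑ x, |qfun J h β ε σ x true - qfun J h β ε σ' x true|
        ≤ ∑ x, (if x = y then 1 - ε else ε * Real.tanh (β * |J y x| / 2)) :=
          Finset.sum_le_sum fun x _ => hbound x
      _ = (1 - ε) + ε * ∑ x, Real.tanh (β * |J y x| / 2) := by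
          rw [← Finset.add_sum_erase _ _ (mem_univ y), if_pos rfl]
          have hmid : ∑ x ∈ univ.erase y,
              (if x = y then 1 - ε else ε * Real.tanh (β * |J y x| / 2))
              = ε * ∑ x, Real.tanh (β * |J y x| / 2) := by
            rw [Finset.mul_sum,
              ← Finset.add_sum_erase _ (fun x => ε * Real.tanh (β * |J y x| / 2)) (mem_univ y),
              hJdiag y]
            rw [show (β * |(0:ℝ)| / 2) = 0 by simp, Real.tanh_zero, mul_zero, zero_add]
            exact Finset.sum_congr rfl fun x hx => if_neg (Finset.ne_of_mem_erase hx)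
          rw [hmid]
      _ ≤ r := hrle y

end contract
section kpowlem

variable [Fintype V] [DecidableEq V]

lemma kpow_succ_apply (P : (V → Bool) → (V → Bool) → ℝ) (n : ℕ) (σ : V → Bool)
    (f : (V → Bool) → ℝ) :
    ∑ τ, kpow P (n+1) σ τ * f τ = ∑ η, P σ η * ∑ τ, kpow P n η τ * f τ := by
  simp only [kpow]
  calc ∑ τ, (∑ η, P σ η * kpow P n η τ) * f τ
      = ∑ τ, ∑ η, P σ η * kpow P n η τ * f τ := by simp_rw [Finset.sum_mul]
    _ = ∑ η, ∑ τ, P σ η * kpow P n η τ * f τ := Finset.sum_comm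
    _ = ∑ η, P σ η * ∑ τ, kpow P n η τ * f τ := by simp_rw [Finset.mul_sum, mul_assoc]

lemma kpow_zero_apply (P : (V → Bool) → (V → Bool) → ℝ) (σ : V → Bool)
    (f : (V → Bool) → ℝ) :
    ∑ τ, kpow P 0 σ τ * f τ = f σ := by
  simp only [kpow]
  rw [Finset.sum_eq_single σ]
  · simp
  · intro τ _ hτ
    rw [if_neg (fun hh => hτ hh.symm), zero_mul]
  · intro hσ; exact absurd (mem_univ σ) hσ

lemma kpow_rowsum (J : V → V → ℝ) (h : V → ℝ) (β ε : ℝ) (t : ℕ) (σ : V → Bool) :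
    ∑ τ, kpow (Peps J h β ε) t σ τ = 1 := by
  induction t generalizing σ with
  | zero =>
    have := kpow_zero_apply (Peps J h β ε) σ (fun _ => (1:ℝ))
    simpa using this
  | succ n ih =>
    have := kpow_succ_apply (Peps J h β ε) n σ (fun _ => (1:ℝ))
    simp only [mul_one] at this
    rw [this]
    · simp only [ih]
      simpa using Peps_rowsum J h β ε σ

lemma kpow_contract (J : V → V → ℝ) (h : V → ℝ) (hsym : ∀ x y, J x y = J y x)
    (β : ℝ) (hβ : 0 ≤ β) {ε : ℝ} (hε : ε ∈ Set.Ioc (0:ℝ) 1)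
    (hJdiag : ∀ x, J x x = 0) (r : ℝ) (hr0 : 0 ≤ r)
    (hrle : ∀ u, (1 - ε) + ε * ∑ x, Real.tanh (β * |J u x| / 2) ≤ r)
    (f : (V → Bool) → ℝ)
    (hf : ∀ (x₀ : V) (τ τ' : V → Bool), (∀ z, z ≠ x₀ → τ z = τ' z) → |f τ - f τ'| ≤ 1)
    (t : ℕ) :
    ∀ (y : V) (σ σ' : V → Bool), (∀ z, z ≠ y → σ z = σ' z) →
      |∑ τ, kpow (Peps J h β ε) t σ τ * f τ - ∑ τ, kpow (Peps J h β ε) t σ' τ * f τ|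
        ≤ r ^ t := by
  induction t with
  | zero =>
    intro y σ σ' hagree
    rw [kpow_zero_apply, kpow_zero_apply, pow_zero]
    exact hf y σ σ' hagree
  | succ n ih =>
    intro y σ σ' hagree
    rw [kpow_succ_apply, kpow_succ_apply]
    have hstep := step_contract J h hsym β hβ hε hJdiag r hr0 hrle
      (fun η => ∑ τ, kpow (Peps J h β ε) n η τ * f τ) (r ^ n) (pow_nonneg hr0 n)
      (fun x₀ τ τ' hag => ih x₀ τ τ' hag) y σ σ' hagree
    calc |∑ η, Peps J h β ε σ η * ∑ τ, kpow (Peps J h β ε) n η τ * f τ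
          - ∑ η, Peps J h β ε σ' η * ∑ τ, kpow (Peps J h β ε) n η τ * f τ|
        ≤ r * r ^ n := hstep
      _ = r ^ (n + 1) := by rw [pow_succ]; ring

lemma path_bound (g : (V → Bool) → ℝ) (M : ℝ) (hM : 0 ≤ M)
    (hosc : ∀ (y : V) (σ σ' : V → Bool), (∀ z, z ≠ y → σ z = σ' z) → |g σ - g σ'| ≤ M)
    (σ σ' : V → Bool) : |g σ - g σ'| ≤ (Fintype.card V) * M := by
  classical
  have main : ∀ s : Finset V, ∀ σ σ' : V → Bool, (∀ x, x ∉ s → σ x = σ' x) →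
      |g σ - g σ'| ≤ s.card * M := by
    intro s
    induction s using Finset.induction_on with
    | empty =>
      intro σ σ' hag
      have : σ = σ' := funext fun x => hag x (Finset.notMem_empty x)
      simp [this]
    | insert a s ha ih =>
      intro σ σ' hag
      set σ'' := Function.update σ a (σ' a) with hσ''
      have h1 : |g σ - g σ''| ≤ M :=
        hosc a σ σ'' fun z hz => (Function.update_of_ne hz _ _).symm
      have h2 : |g σ'' - g σ'| ≤ s.card * M := by
        refine ih σ'' σ' fun x hx => ?_
        by_cases hxa : x = a
        · subst hxa; rw [hσ'']; exact Function.update_self _ _ _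
        · rw [hσ'', Function.update_of_ne hxa]
          exact hag x (by simp [Finset.mem_insert, hxa, hx])
      calc |g σ - g σ'| ≤ |g σ - g σ''| + |g σ'' - g σ'| := abs_sub_le _ _ _
        _ ≤ M + s.card * M := add_le_add h1 h2
        _ = (insert a s).card * M := by
            rw [Finset.card_insert_of_notMem ha]; push_cast; ring
  have := main univ σ σ' (fun x hx => absurd (mem_univ x) hx)
  simpa [Finset.card_univ] using this

lemma tv_rows (J : V → V → ℝ) (h : V → ℝ) (hsym : ∀ x y, J x y = J y x)
    (β : ℝ) (hβ : 0 ≤ β) {ε : ℝ} (hε : ε ∈ Set.Ioc (0:ℝ) 1)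
    (hJdiag : ∀ x, J x x = 0) (r : ℝ) (hr0 : 0 ≤ r)
    (hrle : ∀ u, (1 - ε) + ε * ∑ x, Real.tanh (β * |J u x| / 2) ≤ r)
    (t : ℕ) (σ σ' : V → Bool) :
    tvDist (kpow (Peps J h β ε) t σ) (kpow (Peps J h β ε) t σ')
      ≤ (Fintype.card V) * r ^ t := by
  classical
  set a : (V → Bool) → ℝ := kpow (Peps J h β ε) t σ with haa
  set b : (V → Bool) → ℝ := kpow (Peps J h β ε) t σ' with hbb
  set f : (V → Bool) → ℝ := fun τ => if b τ ≤ a τ then 1 else 0 with hff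
  have hf01 : ∀ (x₀ : V) (τ τ' : V → Bool), (∀ z, z ≠ x₀ → τ z = τ' z) →
      |f τ - f τ'| ≤ 1 := by
    intro x₀ τ τ' _
    rw [hff]
    dsimp only
    split <;> split <;> norm_num
  have hmax : ∀ τ, (a τ - b τ) * f τ = max (a τ - b τ) 0 := by
    intro τ
    rw [hff]
    dsimp only
    by_cases hc : b τ ≤ a τ
    · rw [if_pos hc, mul_one, max_eq_left (by linarith)]
    · rw [if_neg hc, mul_zero, max_eq_right (by push_neg at hc; linarith)]
  have habs : ∀ τ, |a τ - b τ| = 2 * max (a τ - b τ) 0 - (a τ - b τ) := by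
    intro τ
    rcases le_total (b τ) (a τ) with hc | hc
    · rw [abs_of_nonneg (by linarith), max_eq_left (by linarith)]; ring
    · rw [abs_of_nonpos (by linarith), max_eq_right (by linarith)]; ring
  have hsum0 : ∑ τ, (a τ - b τ) = 0 := by
    rw [Finset.sum_sub_distrib, haa, hbb, kpow_rowsum, kpow_rowsum, sub_self]
  have key : tvDist a b = ∑ τ, (a τ - b τ) * f τ := by
    rw [tvDist]
    simp_rw [habs, hmax]
    rw [Finset.sum_sub_distrib, ← Finset.mul_sum, hsum0]
    ring
  have hdiff : ∑ τ, (a τ - b τ) * f τ = ∑ τ, a τ * f τ - ∑ τ, b τ * f τ := by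
    rw [← Finset.sum_sub_distrib]
    exact Finset.sum_congr rfl fun τ _ => by ring
  rw [key, hdiff]
  have hcon := kpow_contract J h hsym β hβ hε hJdiag r hr0 hrle f hf01 t
  have hpath := path_bound (fun ρ => ∑ τ, kpow (Peps J h β ε) t ρ τ * f τ)
    (r ^ t) (pow_nonneg hr0 t) (fun y ρ ρ' hag => hcon y ρ ρ' hag) σ σ'
  calc ∑ τ, a τ * f τ - ∑ τ, b τ * f τ
      ≤ |∑ τ, a τ * f τ - ∑ τ, b τ * f τ| := le_abs_self _
    _ ≤ (Fintype.card V) * r ^ t := hpath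

lemma stat_iter (J : V → V → ℝ) (h : V → ℝ) (β ε : ℝ) (pi : (V → Bool) → ℝ)
    (hstat : ∀ τ, ∑ σ, pi σ * Peps J h β ε σ τ = pi τ) :
    ∀ (t : ℕ) (τ : V → Bool), ∑ σ, pi σ * kpow (Peps J h β ε) t σ τ = pi τ := by
  intro t
  induction t with
  | zero =>
    intro τ
    simp only [kpow]
    rw [Finset.sum_eq_single τ]
    · simp
    · intro σ _ hσ
      rw [if_neg hσ, mul_zero]
    · intro hτ; exact absurd (mem_univ τ) hτ
  | succ n ih =>
    intro τ
    simp only [kpow]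
    calc ∑ σ, pi σ * ∑ η, Peps J h β ε σ η * kpow (Peps J h β ε) n η τ
        = ∑ σ, ∑ η, pi σ * Peps J h β ε σ η * kpow (Peps J h β ε) n η τ := by
          simp_rw [Finset.mul_sum, mul_assoc]
      _ = ∑ η, ∑ σ, pi σ * Peps J h β ε σ η * kpow (Peps J h β ε) n η τ :=
          Finset.sum_comm
      _ = ∑ η, (∑ σ, pi σ * Peps J h β ε σ η) * kpow (Peps J h β ε) n η τ := by
          simp_rw [Finset.sum_mul]
      _ = ∑ η, pi η * kpow (Peps J h β ε) n η τ := by simp_rw [hstat]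
      _ = pi τ := ih τ

end kpowlem
section final

variable [Fintype V] [DecidableEq V]

lemma tv_to_pi (J : V → V → ℝ) (h : V → ℝ) (hsym : ∀ x y, J x y = J y x)
    (β : ℝ) (hβ : 0 ≤ β) {ε : ℝ} (hε : ε ∈ Set.Ioc (0:ℝ) 1)
    (hJdiag : ∀ x, J x x = 0) (r : ℝ) (hr0 : 0 ≤ r)
    (hrle : ∀ u, (1 - ε) + ε * ∑ x, Real.tanh (β * |J u x| / 2) ≤ r)
    (pi : (V → Bool) → ℝ) (hpi0 : ∀ σ, 0 ≤ pi σ) (hpi1 : ∑ σ, pi σ = 1)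
    (hstat : ∀ τ, ∑ σ, pi σ * Peps J h β ε σ τ = pi τ)
    (t : ℕ) (σ : V → Bool) :
    tvDist (kpow (Peps J h β ε) t σ) pi ≤ (Fintype.card V) * r ^ t := by
  have hπ := stat_iter J h β ε pi hstat t
  have hrw : ∀ τ, kpow (Peps J h β ε) t σ τ - pi τ
      = ∑ σ', pi σ' * (kpow (Peps J h β ε) t σ τ - kpow (Peps J h β ε) t σ' τ) := by
    intro τ
    have e1 : ∑ σ', pi σ' * (kpow (Peps J h β ε) t σ τ - kpow (Peps J h β ε) t σ' τ)
        = (∑ σ', pi σ') * kpow (Peps J h β ε) t σ τ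
          - ∑ σ', pi σ' * kpow (Peps J h β ε) t σ' τ := by
      rw [Finset.sum_mul, ← Finset.sum_sub_distrib]
      exact Finset.sum_congr rfl fun σ' _ => by ring
    rw [e1, hpi1, one_mul, hπ τ]
  rw [tvDist]
  calc (1/2) * ∑ τ, |kpow (Peps J h β ε) t σ τ - pi τ|
      ≤ (1/2) * ∑ τ, ∑ σ', pi σ'
          * |kpow (Peps J h β ε) t σ τ - kpow (Peps J h β ε) t σ' τ| := by
        refine mul_le_mul_of_nonneg_left (Finset.sum_le_sum fun τ _ => ?_) (by norm_num)
        rw [hrw τ]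
        refine le_trans (Finset.abs_sum_le_sum_abs _ _) (Finset.sum_le_sum fun σ' _ => ?_)
        rw [abs_mul, abs_of_nonneg (hpi0 σ')]
    _ = ∑ σ', pi σ' * tvDist (kpow (Peps J h β ε) t σ) (kpow (Peps J h β ε) t σ') := by
        simp_rw [Finset.mul_sum]
        rw [Finset.sum_comm]
        refine Finset.sum_congr rfl fun σ' _ => ?_
        rw [tvDist, Finset.mul_sum, Finset.mul_sum]
        exact Finset.sum_congr rfl fun τ _ => by ring
    _ ≤ ∑ σ', pi σ' * ((Fintype.card V) * r ^ t) := by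
        refine Finset.sum_le_sum fun σ' _ => ?_
        exact mul_le_mul_of_nonneg_left
          (tv_rows J h hsym β hβ hε hJdiag r hr0 hrle t σ σ') (hpi0 σ')
    _ = (Fintype.card V) * r ^ t := by rw [← Finset.sum_mul, hpi1, one_mul]

lemma numeric_bound (n : ℕ) (hn : 1 ≤ n) (r δ : ℝ) (hr0 : 0 < r) (hr1 : r < 1)
    (hδ : 0 < δ) (t : ℕ)
    (ht : ⌈(Real.log n - Real.log δ) / Real.log (1 / r)⌉ ≤ (t : ℤ)) :
    (n : ℝ) * r ^ t ≤ δ := by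
  have hlogr : Real.log (1 / r) = - Real.log r := by rw [one_div, Real.log_inv]
  have hlr : 0 < Real.log (1 / r) := by
    rw [hlogr]
    have := Real.log_neg hr0 hr1
    linarith
  have h1 : (Real.log n - Real.log δ) / Real.log (1 / r) ≤ (t : ℝ) := by
    refine le_trans (Int.le_ceil _) ?_
    exact_mod_cast ht
  have h2 : Real.log n - Real.log δ ≤ (t : ℝ) * Real.log (1 / r) := by
    rw [div_le_iff₀ hlr] at h1
    exact h1
  have hnpos : (0:ℝ) < (n:ℝ) := by exact_mod_cast hn
  have h3 : Real.log ((n:ℝ) * r ^ t) ≤ Real.log δ := by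
    rw [Real.log_mul hnpos.ne' (pow_ne_zero _ hr0.ne'), Real.log_pow]
    rw [hlogr] at h2
    push_cast
    linarith
  have hpos : 0 < (n:ℝ) * r ^ t := by positivity
  exact (Real.log_le_log_iff hpos hδ).1 h3

end final
/-- Mixing time of the ε-SCA: with
`r = (1−ε) + ε·max_u ∑_y tanh(β|J_{u,y}|/2)` and `0 < r < 1`, for any stationary
probability distribution π of the ε-SCA kernel, every δ > 0, and every
`t ≥ ⌈(log|V| − log δ)/log(1/r)⌉`, we have `max_σ ‖P^t_{β,ε}(σ,·) − π‖_TV ≤ δ`;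
in particular `t_mix(δ) ≤ ⌈(log|V| − log δ)/log(1/r)⌉`. -/
theorem epsSCA_mixing_time [Fintype V] [DecidableEq V] [Nonempty V]
    (G : SimpleGraph V) (J : V → V → ℝ) (h : V → ℝ)
    (hsym : ∀ x y, J x y = J y x)
    (hJG : ∀ x y, ¬ G.Adj x y → J x y = 0)
    (β : ℝ) (hβ : 0 ≤ β) (ε : ℝ) (hε : ε ∈ Set.Ioc (0 : ℝ) 1)
    (r : ℝ)
    (hr : r = (1 - ε) + ε * univ.sup' univ_nonempty (fun u => ∑ y, Real.tanh (β * |J u y| / 2)))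
    (hr0 : 0 < r) (hr1 : r < 1)
    (pi : (V → Bool) → ℝ) (hpi0 : ∀ σ, 0 ≤ pi σ) (hpi1 : ∑ σ, pi σ = 1)
    (hstat : ∀ τ, ∑ σ, pi σ * Peps J h β ε σ τ = pi τ) :
    (∀ δ : ℝ, 0 < δ → ∀ t : ℕ,
        (⌈(Real.log (Fintype.card V) - Real.log δ) / Real.log (1 / r)⌉ ≤ (t : ℤ)) →
        ∀ σ : V → Bool, tvDist (kpow (Peps J h β ε) t σ) pi ≤ δ) ∧
    (∀ δ : ℝ, 0 < δ →
        sInf {t : ℕ | ∀ σ : V → Bool, tvDist (kpow (Peps J h β ε) t σ) pi ≤ δ} ≤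
          (⌈(Real.log (Fintype.card V) - Real.log δ) / Real.log (1 / r)⌉).toNat) := by
  have hJdiag : ∀ x, J x x = 0 := fun x => hJG x x (G.irrefl)
  have hrle : ∀ u, (1 - ε) + ε * ∑ x, Real.tanh (β * |J u x| / 2) ≤ r := by
    intro u
    rw [hr]
    have hsup := Finset.le_sup' (fun u => ∑ y, Real.tanh (β * |J u y| / 2))
      (mem_univ u)
    have := mul_le_mul_of_nonneg_left hsup hε.1.le
    linarith
  have hcard : 1 ≤ Fintype.card V := Fintype.card_pos
  have hmain : ∀ δ : ℝ, 0 < δ → ∀ t : ℕ,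
      (⌈(Real.log (Fintype.card V) - Real.log δ) / Real.log (1 / r)⌉ ≤ (t : ℤ)) →
      ∀ σ : V → Bool, tvDist (kpow (Peps J h β ε) t σ) pi ≤ δ := by
    intro δ hδ t ht σ
    refine le_trans (tv_to_pi J h hsym β hβ hε hJdiag r hr0.le hrle pi hpi0 hpi1
      hstat t σ) ?_
    exact numeric_bound (Fintype.card V) hcard r δ hr0 hr1 hδ t ht
  refine ⟨hmain, ?_⟩
  intro δ hδ
  apply Nat.sInf_le
  show ∀ σ : V → Bool, tvDist (kpow (Peps J h β ε)
    (⌈(Real.log (Fintype.card V) - Real.log δ) / Real.log (1 / r)⌉).toNat σ) pi ≤ δ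
  exact hmain δ hδ _ (Int.self_le_toNat _)
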